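/- Suppose S ⊆ {1,…,n} is a set of players such that ∑_{j∈S} a_{ij} ≥ 1/(2+α) for every i ∈ S and ∑_{j∉S} a_{ij} ≥ (1+α)/(2+α) for every i ∉ S. Then the clustered strategy profile x* with x*_i = +1 for i ∈ S and x*_i = −1 for i ∉ S is a Nash equilibrium of the network coordination game (local coordination with global diversity). -/

import Mathlib

open Finset

/-- Payoff of player `i` in the binary network coordination game for choosing
strategy `s ∈ {-1,+1}` against the profile `x`, with relative advantage `α`. -/
noncomputable def coordPayoff (n : ℕ) (A : Fin n → Fin n → ℝ) (α : ℝ) (x : Fin n → ℝ)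
    (i : Fin n) (s : ℝ) : ℝ :=
  (1 / 4) * ∑ j, A i j * ((1 + α) * (1 + s) * (1 + x j) + (1 - s) * (1 - x j))

lemma coordPayoff_eq (n : ℕ) (A : Fin n → Fin n → ℝ) (α : ℝ) (S : Finset (Fin n))
    (i : Fin n) (s : ℝ) :
    coordPayoff n A α (fun j => if j ∈ S then 1 else -1) i s =
      (1 / 2) * ((1 + α) * (1 + s) * (∑ j ∈ S, A i j) + (1 - s) * (∑ j ∈ Sᶜ, A i j)) := by
  unfold coordPayoff
  rw [← Finset.sum_add_sum_compl S]
  have h1 : ∑ j ∈ S, A i j * ((1 + α) * (1 + s) * (1 + if j ∈ S then (1:ℝ) else -1)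
      + (1 - s) * (1 - if j ∈ S then (1:ℝ) else -1))
      = ∑ j ∈ S, ((1 + α) * (1 + s) * 2) * A i j := by
    apply Finset.sum_congr rfl
    intro j hj
    simp [hj]; ring
  have h2 : ∑ j ∈ Sᶜ, A i j * ((1 + α) * (1 + s) * (1 + if j ∈ S then (1:ℝ) else -1)
      + (1 - s) * (1 - if j ∈ S then (1:ℝ) else -1))
      = ∑ j ∈ Sᶜ, ((1 - s) * 2) * A i j := by
    apply Finset.sum_congr rfl
    intro j hj
    rw [Finset.mem_compl] at hj
    simp [hj]; ring
  rw [h1, h2, ← Finset.mul_sum, ← Finset.mul_sum]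
  ring

/-- If `S` satisfies `∑_{j∈S} a_{ij} ≥ 1/(2+α)` for every `i ∈ S`
and `∑_{j∉S} a_{ij} ≥ (1+α)/(2+α)` for every `i ∉ S`, then the clustered profile
`x*` with `x*_i = +1` on `S` and `x*_i = -1` outside `S` is a Nash equilibrium of
the network coordination game. -/
theorem clustered_profile_nash_equilibrium
    (n : ℕ) (hn : 2 ≤ n) (A : Fin n → Fin n → ℝ)
    (hA : ∀ i j, 0 ≤ A i j) (hdiag : ∀ i, A i i = 0)
    (hrow : ∀ i, ∑ j, A i j = 1)
    (α : ℝ) (hα : α > -1)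
    (S : Finset (Fin n))
    (hin : ∀ i ∈ S, 1 / (2 + α) ≤ ∑ j ∈ S, A i j)
    (hout : ∀ i ∉ S, (1 + α) / (2 + α) ≤ ∑ j ∈ Sᶜ, A i j) :
    ∀ i : Fin n, ∀ s : ℝ, (s = -1 ∨ s = 1) →
      coordPayoff n A α (fun j => if j ∈ S then 1 else -1) i
          ((fun j => if j ∈ S then (1 : ℝ) else -1) i) ≥
        coordPayoff n A α (fun j => if j ∈ S then 1 else -1) i s := by
  intro i s hs
  have h2α : (0:ℝ) < 2 + α := by linarith
  have hpq : (∑ j ∈ S, A i j) + (∑ j ∈ Sᶜ, A i j) = 1 := by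
    rw [Finset.sum_add_sum_compl]; exact hrow i
  rw [coordPayoff_eq, coordPayoff_eq]
  by_cases hi : i ∈ S
  · simp only [hi, if_true]
    have hp := hin i hi
    have key : (1:ℝ) ≤ (2 + α) * (∑ j ∈ S, A i j) := by
      have := (div_le_iff₀' h2α).mp hp
      linarith
    rcases hs with h | h <;> subst h <;> nlinarith [Finset.sum_nonneg fun j (_ : j ∈ Sᶜ) => hA i j]
  · simp only [hi, if_false]
    have hq := hout i hi
    have key : (1 + α) ≤ (2 + α) * (∑ j ∈ Sᶜ, A i j) := by
      have := (div_le_iff₀' h2α).mp hq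
      linarith
    rcases hs with h | h <;> subst h <;> nlinarith [Finset.sum_nonneg fun j (_ : j ∈ S) => hA i j]
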